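/- Let G be a graph with umbrella-free ordering π and π′ = RMN(π). Let x, y ∈ V with y <_π x and y <_{π′} x. Then y is not the first vertex of π′, and the vertex z immediately preceding y in π′ satisfies y <_π x <_π z, zy ∈ E, and zx ∉ E. -/

import Mathlib

def UmbrellaFree {V : Type*} [LinearOrder V] (G : SimpleGraph V) : Prop :=
  ∀ x y z : V, x < y → y < z → G.Adj x z → G.Adj x y ∨ G.Adj y z

open Classical in
/-- One run of the RightMost-Neighbor traversal with a fuel parameter: `u` is the set of
unvisited vertices, and the optional argument is the currently visited vertex. From the
current vertex we move to its rightmost (in the linear order σ on `V`) unvisited neighbor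
if one exists; otherwise we restart at the rightmost unvisited vertex. -/
noncomputable def rmnAux {V : Type*} [LinearOrder V] (G : SimpleGraph V) :
    ℕ → Finset V → Option V → List V
  | 0, _, _ => []
  | fuel + 1, u, none =>
      if h : u.Nonempty then
        u.max' h :: rmnAux G fuel (u.erase (u.max' h)) (some (u.max' h))
      else []
  | fuel + 1, u, some c =>
      if h : (u.filter (fun w => G.Adj c w)).Nonempty then
        (u.filter (fun w => G.Adj c w)).max' h ::
          rmnAux G fuel (u.erase ((u.filter (fun w => G.Adj c w)).max' h))
            (some ((u.filter (fun w => G.Adj c w)).max' h))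
      else rmnAux G fuel u none

/-- `RMN(σ)`, where σ is the linear order on `V`: the vertex ordering produced by the
rightmost-neighbor greedy traversal. -/
noncomputable def rmn {V : Type*} [Fintype V] [LinearOrder V] (G : SimpleGraph V) : List V :=
  rmnAux G (2 * Fintype.card V + 1) Finset.univ none

open Classical in
lemma rmnAux_spec {V : Type*} [LinearOrder V] (G : SimpleGraph V) (hUF : UmbrellaFree G) :
    ∀ (fuel : ℕ) (u : Finset V) (c : Option V),
      (∀ cv, c = some cv → cv ∉ u ∧ ∀ w ∈ u, cv < w → G.Adj cv w) →
      ∀ x y : V, y < x → x ∈ u →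
      y ∈ rmnAux G fuel u c →
      (rmnAux G fuel u c).idxOf y < (rmnAux G fuel u c).idxOf x →
      (∃ k z, (rmnAux G fuel u c)[k]? = some z ∧ (rmnAux G fuel u c)[k+1]? = some y ∧
        x < z ∧ G.Adj z y ∧ ¬ G.Adj z x) ∨
      ((rmnAux G fuel u c).head? = some y ∧
        ∃ z, c = some z ∧ x < z ∧ G.Adj z y ∧ ¬ G.Adj z x) := by
  intro fuel
  induction fuel with
  | zero => intro u c _ x y _ _ hy _; simp [rmnAux] at hy
  | succ fuel ih =>
    intro u c hinv x y hlt hxu hy hidx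
    match c with
    | none =>
      have hne : u.Nonempty := ⟨x, hxu⟩
      rw [rmnAux] at hy hidx ⊢
      rw [dif_pos hne] at hy hidx ⊢
      set M := u.max' hne with hM
      have hxM : x ≤ M := u.le_max' x hxu
      have hyM : y ≠ M := fun h => absurd (h ▸ hxM) (not_le.mpr hlt)
      have hxMne : x ≠ M := by
        intro h
        rw [← h, List.idxOf_cons_self] at hidx
        omega
      have hyL : y ∈ rmnAux G fuel (u.erase M) (some M) := by
        rcases List.mem_cons.mp hy with h | h
        · exact absurd h hyM
        · exact h
      have hxu' : x ∈ u.erase M := Finset.mem_erase.mpr ⟨hxMne, hxu⟩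
      have hinv' : ∀ cv, (some M : Option V) = some cv →
          cv ∉ u.erase M ∧ ∀ w ∈ u.erase M, cv < w → G.Adj cv w := by
        rintro cv ⟨rfl⟩
        refine ⟨Finset.notMem_erase _ _, fun w hw hlt' => ?_⟩
        exact absurd (u.le_max' w (Finset.mem_of_mem_erase hw)) (not_le.mpr hlt')
      have hidx' : (rmnAux G fuel (u.erase M) (some M)).idxOf y <
          (rmnAux G fuel (u.erase M) (some M)).idxOf x := by
        rw [List.idxOf_cons_ne _ (Ne.symm hyM), List.idxOf_cons_ne _ (Ne.symm hxMne)] at hidx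
        omega
      rcases ih (u.erase M) (some M) hinv' x y hlt hxu' hyL hidx' with
        ⟨k, z, h1, h2, h3⟩ | ⟨h1, z, hz, h3⟩
      · exact Or.inl ⟨k + 1, z, by simpa using h1, by simpa using h2, h3⟩
      · refine Or.inl ⟨0, M, by simp, ?_, ?_⟩
        · rw [List.getElem?_cons_succ, ← List.head?_eq_getElem?]
          exact h1
        · obtain ⟨rfl⟩ := hz
          exact h3
    | some cv =>
      obtain ⟨hcu, hJ⟩ := hinv cv rfl
      by_cases hne : (u.filter (fun w => G.Adj cv w)).Nonempty
      · rw [rmnAux] at hy hidx ⊢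
        rw [dif_pos hne] at hy hidx ⊢
        set M := (u.filter (fun w => G.Adj cv w)).max' hne with hM
        have hMmem := (u.filter (fun w => G.Adj cv w)).max'_mem hne
        rw [← hM, Finset.mem_filter] at hMmem
        obtain ⟨hMu, hMadj⟩ := hMmem
        have hmaxle : ∀ w ∈ u, G.Adj cv w → w ≤ M := fun w hw ha =>
          Finset.le_max' _ w (Finset.mem_filter.mpr ⟨hw, ha⟩)
        by_cases hyM : y = M
        · -- y is the head; z = cv
          subst hyM
          have hnadj : ¬ G.Adj cv x := fun ha => absurd (hmaxle x hxu ha) (not_le.mpr hlt)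
          have hxcv : x < cv := by
            rcases lt_trichotomy x cv with h | h | h
            · exact h
            · exact absurd (h ▸ hxu) hcu
            · exact absurd (hJ x hxu h) hnadj
          exact Or.inr ⟨rfl, cv, rfl, hxcv, hMadj, hnadj⟩
        · have hxMne : x ≠ M := by
            intro h
            rw [← h, List.idxOf_cons_self] at hidx
            omega
          have hyL : y ∈ rmnAux G fuel (u.erase M) (some M) := by
            rcases List.mem_cons.mp hy with h | h
            · exact absurd h hyM
            · exact h
          have hxu' : x ∈ u.erase M := Finset.mem_erase.mpr ⟨hxMne, hxu⟩
          have hinv' : ∀ c', (some M : Option V) = some c' →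
              c' ∉ u.erase M ∧ ∀ w ∈ u.erase M, c' < w → G.Adj c' w := by
            rintro c' ⟨rfl⟩
            refine ⟨Finset.notMem_erase _ _, fun w hw hMw => ?_⟩
            have hwu : w ∈ u := Finset.mem_of_mem_erase hw
            have hwcv : w ≠ cv := fun h => absurd (h ▸ hwu) hcu
            have hncvw : ¬ G.Adj cv w := fun ha => absurd (hmaxle w hwu ha) (not_le.mpr hMw)
            rcases lt_or_gt_of_ne hwcv with h | h
            · -- M < w < cv, Adj M cv
              rcases hUF M w cv hMw h hMadj.symm with h' | h'
              · exact h'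
              · exact absurd h'.symm hncvw
            · exact absurd (hJ w hwu h) hncvw
          have hidx' : (rmnAux G fuel (u.erase M) (some M)).idxOf y <
              (rmnAux G fuel (u.erase M) (some M)).idxOf x := by
            rw [List.idxOf_cons_ne _ (Ne.symm hyM),
              List.idxOf_cons_ne _ (Ne.symm hxMne)] at hidx
            omega
          rcases ih (u.erase M) (some M) hinv' x y hlt hxu' hyL hidx' with
            ⟨k, z, h1, h2, h3⟩ | ⟨h1, z, hz, h3⟩
          · exact Or.inl ⟨k + 1, z, by simpa using h1, by simpa using h2, h3⟩
          · refine Or.inl ⟨0, M, by simp, ?_, ?_⟩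
            · rw [List.getElem?_cons_succ, ← List.head?_eq_getElem?]
              exact h1
            · obtain ⟨rfl⟩ := hz
              exact h3
      · rw [rmnAux] at hy hidx ⊢
        rw [dif_neg hne] at hy hidx ⊢
        rcases ih u none (by rintro cv' ⟨⟩) x y hlt hxu hy hidx with h | ⟨_, z, hz, _⟩
        · exact Or.inl h
        · exact absurd hz (by simp)

/-- Lemma (auxil-3): for an umbrella-free ordering π (the linear order on `V`) and
π′ = RMN(π), if `y <_π x` and `y` precedes `x` in π′, then `y` is not the first vertex of
π′ and the vertex `z` immediately preceding `y` in π′ satisfies `y <_π x <_π z`,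
`zy ∈ E` and `zx ∉ E`. -/
theorem rmn_previous_vertex {V : Type*} [Fintype V] [LinearOrder V] (G : SimpleGraph V)
    (hUF : UmbrellaFree G) (x y : V) (hlt : y < x)
    (hprec : (rmn G).idxOf y < (rmn G).idxOf x) :
    (rmn G).head? ≠ some y ∧
    ∃ z : V, ∃ k : ℕ, (rmn G)[k]? = some z ∧ (rmn G)[k + 1]? = some y ∧
      x < z ∧ G.Adj z y ∧ ¬ G.Adj z x := by
  have hy : y ∈ rmn G := by
    rw [← List.idxOf_lt_length_iff]
    exact lt_of_lt_of_le hprec (List.idxOf_le_length)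
  have hspec := rmnAux_spec G hUF (2 * Fintype.card V + 1) Finset.univ none
    (by rintro cv ⟨⟩) x y hlt (Finset.mem_univ x) hy hprec
  rcases hspec with ⟨k, z, h1, h2, h3, h4, h5⟩ | ⟨_, z, hz, _⟩
  · refine ⟨?_, z, k, h1, h2, h3, h4, h5⟩
    have hne : (Finset.univ : Finset V).Nonempty := ⟨x, Finset.mem_univ x⟩
    have : (rmn G).head? = some (Finset.univ.max' hne) := by
      rw [rmn, rmnAux, dif_pos hne]
      rfl
    rw [this]
    intro h
    have h' : Finset.univ.max' hne = y := Option.some_injective _ h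
    exact absurd (Finset.le_max' Finset.univ x (Finset.mem_univ x) :
      x ≤ Finset.univ.max' hne) (by rw [h']; exact not_le.mpr hlt)
  · exact absurd hz (by simp)
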